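/- Let Δ be a lower saturated subset of ℝ≥0^n. Then the boundary of Δ (the closure of Δ minus the interior of Δ) has Lebesgue measure zero. In particular, Δ is Lebesgue measurable. -/

import Mathlib

/-- A subset of `ℝ≥0^n` is lower saturated if it contains the origin and contains the
full coordinate box `[0,ξ₁] × ⋯ × [0,ξₙ]` below each of its points. -/
def lowerSat {n : ℕ} (Δ : Set (Fin n → ℝ)) : Prop :=
  (fun _ => (0 : ℝ)) ∈ Δ ∧ ∀ φ ∈ Δ, ∀ ξ : Fin n → ℝ, (∀ i, 0 ≤ ξ i ∧ ξ i ≤ φ i) → ξ ∈ Δ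

/-- A subset of `ℤ≥0^n` is lower `ℤ≥0`-saturated if it contains the origin and is
downward closed for the componentwise order. -/
def lowerSatZ {n : ℕ} (S : Set (Fin n → ℕ)) : Prop :=
  (fun _ => 0) ∈ S ∧ ∀ γ ∈ S, ∀ δ : Fin n → ℕ, (∀ i, δ i ≤ γ i) → δ ∈ S

/-- `Δ(Σ) = ⋃_{γ ∈ Σ} [0,γ₁] × ⋯ × [0,γₙ]`. -/
def DeltaOf {n : ℕ} (S : Set (Fin n → ℕ)) : Set (Fin n → ℝ) :=
  {ξ | ∃ γ ∈ S, ∀ i, 0 ≤ ξ i ∧ ξ i ≤ (γ i : ℝ)}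

/-- `Δ'(Σ) = ⋃_{γ ∈ Σ} [γ₁,γ₁+1) × ⋯ × [γₙ,γₙ+1)`. -/
def Delta'Of {n : ℕ} (S : Set (Fin n → ℕ)) : Set (Fin n → ℝ) :=
  {ξ | ∃ γ ∈ S, ∀ i, (γ i : ℝ) ≤ ξ i ∧ ξ i < (γ i : ℝ) + 1}

/-- A lower saturated subset `Δ` of `ℝ≥0^n` has topological boundary of
Lebesgue measure zero; in particular `Δ` is Lebesgue measurable (null measurable for the
Borel volume, hence measurable for the completed Lebesgue measure). -/
theorem stmt3 (n : ℕ) (Δ : Set (Fin n → ℝ)) (hΔ : lowerSat Δ)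
    (hΔpos : ∀ ξ ∈ Δ, ∀ i, 0 ≤ ξ i) :
    MeasureTheory.volume (closure Δ \ interior Δ) = 0 ∧
    MeasureTheory.NullMeasurableSet Δ MeasureTheory.volume := by
  classical
  have key : MeasureTheory.volume (frontier Δ) = 0 := by
    set L : Set (Fin n → ℝ) := {ξ | ∃ φ ∈ Δ, ∀ i, ξ i ≤ φ i} with hL
    set Q : Set (Fin n → ℝ) := {ξ | ∀ i, 0 ≤ ξ i} with hQ
    have hLlow : IsLowerSet L := by
      rintro a b hba ⟨φ, hφ, ha⟩
      exact ⟨φ, hφ, fun i => le_trans (hba i) (ha i)⟩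
    have hQup : IsUpperSet Q := fun a b hab ha i => le_trans (ha i) (hab i)
    have hΔeq : Δ = L ∩ Q := by
      ext ξ
      constructor
      · intro hξ
        exact ⟨⟨ξ, hξ, fun i => le_rfl⟩, fun i => hΔpos ξ hξ i⟩
      · rintro ⟨⟨φ, hφ, hle⟩, hpos⟩
        exact hΔ.2 φ hφ ξ (fun i => ⟨hpos i, hle i⟩)
    have hsub : frontier Δ ⊆ frontier L ∪ frontier Q := by
      rw [hΔeq]
      intro x hx
      rcases frontier_inter_subset L Q hx with h | h
      · exact Or.inl h.1
      · exact Or.inr h.2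
    refine MeasureTheory.measure_mono_null hsub ?_
    refine le_antisymm ?_ zero_le
    calc MeasureTheory.volume (frontier L ∪ frontier Q)
        ≤ MeasureTheory.volume (frontier L) + MeasureTheory.volume (frontier Q) :=
          MeasureTheory.measure_union_le _ _
      _ = 0 := by rw [hLlow.null_frontier, hQup.null_frontier, add_zero]
  constructor
  · exact MeasureTheory.measure_mono_null (le_of_eq rfl) key
  · have : Δ = interior Δ ∪ (Δ \ interior Δ) := by
      rw [Set.union_diff_cancel interior_subset]
    rw [this]
    exact (measurableSet_interior.nullMeasurableSet).union
      (MeasureTheory.NullMeasurableSet.of_null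
        (MeasureTheory.measure_mono_null
          (Set.diff_subset_diff_left subset_closure) key))
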